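/- For the TSVD coefficients x^ε = Σ_{σₙ>ε}(⟨y,vₙ⟩/σₙ)vₙ with y = T_N* f, one has ‖x^ε‖ ≤ ‖f − T_N z‖/√ε + ‖z‖ for all z ∈ ℂᴺ. -/

import Mathlib

open scoped ComplexInnerProductSpace

theorem stmt_9 {H : Type*} [NormedAddCommGroup H] [InnerProductSpace ℂ H]
    {N : ℕ} (φ : Fin N → H) (σ : Fin N → ℝ)
    (v : Fin N → EuclideanSpace ℂ (Fin N)) (hv : Orthonormal ℂ v)
    (G : Matrix (Fin N) (Fin N) ℂ) (hG : ∀ m k, G m k = ⟪φ m, φ k⟫)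
    (heig : ∀ n i, G.mulVec (fun j => v n j) i = (σ n : ℂ) * v n i)
    (T : EuclideanSpace ℂ (Fin N) → H) (hT : ∀ z, T z = ∑ n, z n • φ n)
    (ξ : Fin N → H) (hξ : ∀ n, ξ n = T (v n))
    (hσ : ∀ n, 0 ≤ σ n) (ε : ℝ) (hε : 0 < ε)
    (f : H) (y : EuclideanSpace ℂ (Fin N)) (hy : ∀ n, y n = ⟪φ n, f⟫)
    (z : EuclideanSpace ℂ (Fin N)) :
    ‖∑ n ∈ Finset.univ.filter (fun n => ε < σ n),
        (⟪v n, y⟫ / (σ n : ℂ)) • v n‖ ≤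
      ‖f - T z‖ / Real.sqrt ε + ‖z‖ := by
  classical
  set S := Finset.univ.filter (fun n => ε < σ n) with hS
  set w := f - T z with hw
  -- ⟪φ m, T a⟫ = (G.mulVec a) m
  have hφT : ∀ (a : EuclideanSpace ℂ (Fin N)) (m : Fin N),
      ⟪φ m, T a⟫ = G.mulVec (fun j => a j) m := by
    intro a m
    rw [hT]
    simp [Matrix.mulVec, dotProduct, inner_sum, inner_smul_right, hG, mul_comm]
  -- ⟪T a, h⟫ = ∑ conj (a m) * ⟪φ m, h⟫
  have hTinner : ∀ (a : EuclideanSpace ℂ (Fin N)) (h : H),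
      ⟪T a, h⟫ = ∑ m, (starRingEnd ℂ) (a m) * ⟪φ m, h⟫ := by
    intro a h
    rw [hT]
    simp [sum_inner, inner_smul_left, mul_comm]
  -- ⟪ξ n, f⟫ = ⟪v n, y⟫
  have hξf : ∀ n, ⟪ξ n, f⟫ = ⟪v n, y⟫ := by
    intro n
    rw [hξ, hTinner]
    simp [PiLp.inner_apply, hy, mul_comm]
  -- ⟪ξ n, T a⟫ = σ n * ⟪v n, a⟫
  have hξT : ∀ n (a : EuclideanSpace ℂ (Fin N)), ⟪ξ n, T a⟫ = (σ n : ℂ) * ⟪v n, a⟫ := by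
    intro n a
    have h1 : ⟪T a, ξ n⟫ = (σ n : ℂ) * ⟪a, v n⟫ := by
      rw [hξ, hTinner]
      simp only [hφT, heig, PiLp.inner_apply, RCLike.inner_apply, Finset.mul_sum]
      exact Finset.sum_congr rfl fun m _ => by ring
    have := congrArg (starRingEnd ℂ) h1
    rwa [inner_conj_symm, map_mul, Complex.conj_ofReal, inner_conj_symm] at this
  -- ⟪ξ m, ξ n⟫ = σ m * ⟪v m, v n⟫
  have hξξ : ∀ m n, ⟪ξ m, ξ n⟫ = (σ m : ℂ) * ⟪v m, v n⟫ := by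
    intro m n
    rw [show ξ n = T (v n) from hξ n, hξT]
  -- coefficient decomposition on S
  have hcoef : ∀ n ∈ S, (⟪v n, y⟫ / (σ n : ℂ)) = ⟪ξ n, w⟫ / (σ n : ℂ) + ⟪v n, z⟫ := by
    intro n hn
    have hεσ : ε < σ n := by simpa [hS] using hn
    have hσn : (σ n : ℂ) ≠ 0 :=
      Complex.ofReal_ne_zero.mpr (ne_of_gt (lt_trans hε hεσ))
    have hfw : ⟪ξ n, f⟫ = ⟪ξ n, w⟫ + (σ n : ℂ) * ⟪v n, z⟫ := by
      rw [hw, inner_sub_right, hξT]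
      ring
    rw [← hξf, hfw]
    field_simp
  -- ‖∑ c n • v n‖² = ∑ ‖c n‖²
  have key : ∀ (c : Fin N → ℂ), ‖∑ n ∈ S, c n • v n‖ ^ 2 = ∑ n ∈ S, ‖c n‖ ^ 2 := by
    intro c
    rw [InnerProductSpace.norm_sq_eq_re_inner (𝕜 := ℂ), hv.inner_sum c c S, map_sum]
    refine Finset.sum_congr rfl fun n _ => ?_
    rw [RCLike.conj_mul]
    simp [← Complex.ofReal_pow]
  rw [Finset.sum_congr rfl fun n hn => by rw [hcoef n hn, add_smul]]
  rw [Finset.sum_add_distrib]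
  refine le_trans (norm_add_le _ _) (add_le_add ?_ ?_)
  · -- ‖∑ (⟪ξ n, w⟫/σ n) • v n‖ ≤ ‖w‖ / √ε
    have hnorm2 := key (fun n => ⟪ξ n, w⟫ / (σ n : ℂ))
    -- Bessel for the normalized family on S
    have hbessel : ∑ n ∈ S, ‖⟪ξ n, w⟫‖ ^ 2 / σ n ≤ ‖w‖ ^ 2 := by
      set u : {n // n ∈ S} → H := fun n => (((Real.sqrt (σ n) : ℝ) : ℂ))⁻¹ • ξ n with hu
      have hσpos : ∀ n : {n // n ∈ S}, 0 < σ n := by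
        intro n
        have := n.2
        simp only [hS, Finset.mem_filter] at this
        exact lt_trans hε this.2
      have hON : Orthonormal ℂ u := by
        rw [orthonormal_iff_ite]
        intro i j
        rw [hu]
        simp only [inner_smul_left, inner_smul_right, hξξ]
        rw [orthonormal_iff_ite.mp hv]
        by_cases hij : i = j
        · subst hij
          have h2 : ((Real.sqrt (σ i) : ℝ) : ℂ) * ((Real.sqrt (σ i) : ℝ) : ℂ) = (σ i : ℂ) := by
            exact_mod_cast congrArg Complex.ofReal (Real.mul_self_sqrt (hσpos i).le)
          have h1 : ((Real.sqrt (σ i) : ℝ) : ℂ) ≠ 0 := by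
            exact_mod_cast Complex.ofReal_ne_zero.mpr (Real.sqrt_pos.mpr (hσpos i)).ne'
          simp only [Subtype.ext_iff, if_pos rfl, mul_one, map_inv₀, Complex.conj_ofReal,
            if_true]
          field_simp
          linear_combination -h2
        · have hne : (i : Fin N) ≠ (j : Fin N) := fun h => hij (Subtype.ext h)
          simp [Subtype.ext_iff, hne, if_neg hij]
      have hb := hON.sum_inner_products_le w (s := Finset.univ)
      have heq : ∑ n ∈ (Finset.univ : Finset {n // n ∈ S}), ‖⟪u n, w⟫‖ ^ 2
          = ∑ n ∈ S, ‖⟪ξ n, w⟫‖ ^ 2 / σ n := by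
        rw [← Finset.sum_attach S (fun n => ‖⟪ξ n, w⟫‖ ^ 2 / σ n)]
        refine Finset.sum_congr rfl fun n _ => ?_
        rw [hu]
        simp only [inner_smul_left, norm_mul, mul_pow, RCLike.norm_conj]
        have hσp : 0 < σ (n : Fin N) := hσpos n
        rw [norm_inv, Complex.norm_real, Real.norm_eq_abs,
          abs_of_nonneg (Real.sqrt_nonneg _), ← Real.sqrt_inv, Real.sq_sqrt (by positivity)]
        ring
      rw [heq] at hb
      exact hb
    have hsum_le : ∑ n ∈ S, ‖⟪ξ n, w⟫ / (σ n : ℂ)‖ ^ 2 ≤ ‖w‖ ^ 2 / ε := by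
      have step : ∀ n ∈ S, ‖⟪ξ n, w⟫ / (σ n : ℂ)‖ ^ 2 ≤ (‖⟪ξ n, w⟫‖ ^ 2 / σ n) / ε := by
        intro n hn
        have hεσ : ε < σ n := by simpa [hS] using hn
        have hσpos : 0 < σ n := lt_trans hε hεσ
        rw [norm_div, div_pow, Complex.norm_real, Real.norm_eq_abs, abs_of_pos hσpos]
        rw [div_div]
        apply div_le_div_of_nonneg_left (by positivity) (by positivity)
        calc σ n * ε ≤ σ n * σ n := by nlinarith
        _ = σ n ^ 2 := by ring
      calc ∑ n ∈ S, ‖⟪ξ n, w⟫ / (σ n : ℂ)‖ ^ 2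
          ≤ ∑ n ∈ S, (‖⟪ξ n, w⟫‖ ^ 2 / σ n) / ε := Finset.sum_le_sum step
        _ = (∑ n ∈ S, ‖⟪ξ n, w⟫‖ ^ 2 / σ n) / ε := by rw [Finset.sum_div]
        _ ≤ ‖w‖ ^ 2 / ε := by gcongr
    have hfinal : ‖∑ n ∈ S, (⟪ξ n, w⟫ / (σ n : ℂ)) • v n‖ ^ 2 ≤ (‖w‖ / Real.sqrt ε) ^ 2 := by
      rw [hnorm2, div_pow, Real.sq_sqrt hε.le]
      exact hsum_le
    have h1 : (0:ℝ) ≤ ‖w‖ / Real.sqrt ε := by positivity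
    nlinarith [norm_nonneg (∑ n ∈ S, (⟪ξ n, w⟫ / (σ n : ℂ)) • v n)]
  · -- ‖∑ ⟪v n, z⟫ • v n‖ ≤ ‖z‖
    have hnorm2 := key (fun n => (⟪v n, z⟫ : ℂ))
    have hb := hv.sum_inner_products_le z (s := S)
    have hsq : ‖∑ n ∈ S, (⟪v n, z⟫ : ℂ) • v n‖ ^ 2 ≤ ‖z‖ ^ 2 := by
      rw [hnorm2]; exact hb
    nlinarith [norm_nonneg (∑ n ∈ S, (⟪v n, z⟫ : ℂ) • v n), norm_nonneg z]
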